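/- Let I₀(z) = (1/(2π)) ∫₀^{2π} e^{z cos φ} dφ. For real R > r ≥ 0, the integral J₁(R,r) = ∫₀^∞ z e^{−R√(1+z²)} I₀(rz) dz equals (R/(R²−r²)) [1 + 1/√(R²−r²)] e^{−√(R²−r²)}. -/

import Mathlib

open MeasureTheory Set Filter Real

noncomputable section

lemma hasDerivAt_sq (y x : ℝ) :
    HasDerivAt (fun x : ℝ => Real.sqrt (1 + x^2 + y^2)) (x / Real.sqrt (1 + x^2 + y^2)) x := by
  have h : HasDerivAt (fun x : ℝ => 1 + x^2 + y^2) (2*x) x := by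
    simpa using (((hasDerivAt_pow 2 x).const_add 1).add_const (y^2))
  have hpos : (0:ℝ) < 1 + x^2 + y^2 := by positivity
  have h2 := h.sqrt hpos.ne'
  have hs : Real.sqrt (1 + x^2 + y^2) ≠ 0 := by positivity
  convert h2 using 1
  field_simp

lemma hasDerivAt_sq0 (x : ℝ) :
    HasDerivAt (fun x : ℝ => Real.sqrt (1 + x^2)) (x / Real.sqrt (1 + x^2)) x := by
  simpa using hasDerivAt_sq 0 x

lemma tendsto_aux (c : ℝ) (hc : 0 < c) :
    Tendsto (fun t : ℝ => Real.exp (-c*t) * (t/c + 1/c^2)) atTop (nhds 0) := by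
  have h1 : Tendsto (fun t : ℝ => t * Real.exp (-t)) atTop (nhds 0) := by
    simpa using tendsto_pow_mul_exp_neg_atTop_nhds_zero 1
  have hct : Tendsto (fun t : ℝ => c * t) atTop atTop :=
    Tendsto.const_mul_atTop hc tendsto_id
  have h2 : Tendsto (fun t : ℝ => (c*t) * Real.exp (-(c*t))) atTop (nhds 0) := h1.comp hct
  have h3 : Tendsto (fun t : ℝ => Real.exp (-(c*t))) atTop (nhds 0) :=
    Real.tendsto_exp_atBot.comp (tendsto_neg_atTop_atBot.comp hct)
  have h4 : Tendsto (fun t : ℝ => (1/c^2) * ((c*t) * Real.exp (-(c*t))) + (1/c^2) * Real.exp (-(c*t)))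
      atTop (nhds ((1/c^2) * 0 + (1/c^2) * 0)) :=
    ((h2.const_mul (1/c^2)).add (h3.const_mul (1/c^2)))
  have : Tendsto (fun t : ℝ => (1/c^2) * ((c*t) * Real.exp (-(c*t))) + (1/c^2) * Real.exp (-(c*t)))
      atTop (nhds 0) := by simpa using h4
  refine this.congr fun t => ?_
  rw [show -(c*t) = -c*t by ring]
  field_simp

lemma key1D (c : ℝ) (hc : 0 < c) :
    ∫ z in Ioi (0:ℝ), z * Real.exp (-c * Real.sqrt (1+z^2))
      = Real.exp (-c) * (c+1) / c^2 := by
  set g : ℝ → ℝ := fun z => -(Real.exp (-c * Real.sqrt (1+z^2)) * (Real.sqrt (1+z^2)/c + 1/c^2))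
    with hg
  have hderiv : ∀ z : ℝ, HasDerivAt g (z * Real.exp (-c * Real.sqrt (1+z^2))) z := by
    intro z
    have hs := hasDerivAt_sq0 z
    have hspos : (0:ℝ) < Real.sqrt (1+z^2) := Real.sqrt_pos.2 (by positivity)
    have h1 : HasDerivAt (fun z : ℝ => -c * Real.sqrt (1+z^2))
        (-c * (z / Real.sqrt (1+z^2))) z := hs.const_mul (-c)
    have h2 := h1.exp
    have h3 : HasDerivAt (fun z : ℝ => Real.sqrt (1+z^2)/c + 1/c^2)
        ((z / Real.sqrt (1+z^2))/c) z := (hs.div_const c).add_const _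
    have h4 := (h2.mul h3).neg
    refine h4.congr_deriv ?_
    field_simp
    ring
  have hcont : ContinuousWithinAt g (Ici 0) 0 := (hderiv 0).continuousAt.continuousWithinAt
  have hnonneg : ∀ z ∈ Ioi (0:ℝ), 0 ≤ z * Real.exp (-c * Real.sqrt (1+z^2)) := fun z hz =>
    mul_nonneg (le_of_lt hz) (Real.exp_nonneg _)
  have hsqrt_top : Tendsto (fun z : ℝ => Real.sqrt (1+z^2)) atTop atTop := by
    apply tendsto_atTop_mono (fun z => ?_) tendsto_id
    calc (z:ℝ) ≤ |z| := le_abs_self z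
    _ = Real.sqrt (z^2) := (Real.sqrt_sq_eq_abs z).symm
    _ ≤ Real.sqrt (1+z^2) := Real.sqrt_le_sqrt (by linarith)
  have htend : Tendsto g atTop (nhds 0) := by
    have := ((tendsto_aux c hc).comp hsqrt_top).neg
    simpa [hg, Function.comp] using this
  have := integral_Ioi_of_hasDerivAt_of_nonneg hcont (fun z _ => hderiv z) hnonneg htend
  rw [this]
  have : Real.sqrt (1+(0:ℝ)^2) = 1 := by norm_num
  simp only [hg, this]
  field_simp
  ring

lemma integrable_exp_abs (c : ℝ) (hc : 0 < c) :
    Integrable (fun x : ℝ => Real.exp (-c * |x|)) := by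
  have hmeas : AEStronglyMeasurable (fun x : ℝ => Real.exp (-c * |x|)) volume :=
    (Real.continuous_exp.comp ((continuous_const.mul continuous_abs))).aestronglyMeasurable
  have h1 : IntegrableOn (fun x : ℝ => Real.exp (-c * |x|)) (Ioi 0) := by
    apply (exp_neg_integrableOn_Ioi 0 hc).congr_fun (fun x hx => ?_) measurableSet_Ioi
    rw [abs_of_pos hx]
  have h1' : Integrable ((Ioi (0:ℝ)).indicator (fun x : ℝ => Real.exp (-c * |x|))) := by
    rwa [integrable_indicator_iff measurableSet_Ioi]
  have h2' : Integrable ((Iio (0:ℝ)).indicator (fun x : ℝ => Real.exp (-c * |x|))) := by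
    have := h1'.comp_neg
    refine this.congr (Eventually.of_forall fun x => ?_)
    show (Ioi (0:ℝ)).indicator (fun x : ℝ => Real.exp (-c * |x|)) (-x)
        = (Iio (0:ℝ)).indicator (fun x : ℝ => Real.exp (-c * |x|)) x
    by_cases hx : x < 0
    · rw [Set.indicator_of_mem (by simpa using hx : -x ∈ Ioi (0:ℝ)),
        Set.indicator_of_mem (by simpa using hx : x ∈ Iio (0:ℝ)), abs_neg]
    · rw [Set.indicator_of_notMem (by simpa using hx : ¬(-x ∈ Ioi (0:ℝ))),
        Set.indicator_of_notMem (by simpa using hx : ¬(x ∈ Iio (0:ℝ)))]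
  have h2 : IntegrableOn (fun x : ℝ => Real.exp (-c * |x|)) (Iio 0) := by
    rw [IntegrableOn]
    rwa [integrable_indicator_iff measurableSet_Iio] at h2'
  have h0 : IntegrableOn (fun x : ℝ => Real.exp (-c * |x|)) ({0} : Set ℝ) := by
    apply (integrableOn_singleton_iff).mpr
    right
    simp
  have := (h2.union h0).union h1
  rwa [show (Iio (0:ℝ) ∪ {0}) ∪ Ioi 0 = univ by
    ext x
    rcases lt_trichotomy x 0 with h | h | h <;> simp [h],
    integrableOn_univ] at this

lemma sqrt_ge_half (x y : ℝ) : (|x|+|y|)/2 ≤ Real.sqrt (1+x^2+y^2) := by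
  have h := Real.sq_sqrt (show (0:ℝ) ≤ 1+x^2+y^2 by positivity)
  have h2 := Real.sqrt_nonneg (1+x^2+y^2)
  nlinarith [sq_nonneg (|x|-|y|), sq_abs x, sq_abs y, abs_nonneg x, abs_nonneg y,
    sq_nonneg (Real.sqrt (1+x^2+y^2) - 1), sq_nonneg (|x|+|y|-2)]

lemma abs_le_sqrt' (x y : ℝ) : |x| ≤ Real.sqrt (1+x^2+y^2) := by
  rw [← Real.sqrt_sq_eq_abs]
  exact Real.sqrt_le_sqrt (by nlinarith)

lemma integrable2 (c : ℝ) (hc : 0 < c) :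
    Integrable (fun v : ℝ×ℝ => Real.exp (-c * Real.sqrt (1+v.1^2+v.2^2))) := by
  have hcont : Continuous (fun v : ℝ×ℝ => Real.exp (-c * Real.sqrt (1+v.1^2+v.2^2))) := by
    fun_prop
  have hg : Integrable (fun v : ℝ×ℝ => Real.exp (-(c/2) * |v.1|) * Real.exp (-(c/2) * |v.2|)) := by
    rw [MeasureTheory.Measure.volume_eq_prod]
    exact (integrable_exp_abs (c/2) (by linarith)).mul_prod (integrable_exp_abs (c/2) (by linarith))
  refine hg.mono' hcont.aestronglyMeasurable (Eventually.of_forall fun v => ?_)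
  rw [Real.norm_eq_abs, abs_of_nonneg (Real.exp_nonneg _), ← Real.exp_add]
  apply Real.exp_le_exp.2
  have := sqrt_ge_half v.1 v.2
  nlinarith

lemma subst_lemma (R r : ℝ) (hr : 0 ≤ r) (hR : r < R) (y : ℝ) :
    (∫ x : ℝ, Real.exp (-R * Real.sqrt (1+x^2+y^2) + r*x))
      = ∫ u : ℝ, ((R + r * (u / Real.sqrt (1+u^2+y^2))) / Real.sqrt (R^2-r^2))
          * Real.exp (-Real.sqrt (R^2-r^2) * Real.sqrt (1+u^2+y^2)) := by
  have hR0 : 0 < R := lt_of_le_of_lt hr hR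
  set a : ℝ := Real.sqrt (R^2-r^2) with ha_def
  have ha : 0 < a := Real.sqrt_pos.2 (by nlinarith)
  have ha2 : a^2 = R^2 - r^2 := Real.sq_sqrt (by nlinarith)
  set s : ℝ → ℝ := fun u => Real.sqrt (1+u^2+y^2) with hs_def
  have hs : ∀ u, 0 < s u := fun u => Real.sqrt_pos.2 (by positivity)
  have hs2 : ∀ u, (s u)^2 = 1+u^2+y^2 := fun u => Real.sq_sqrt (by positivity)
  have habs : ∀ u, |u| ≤ s u := fun u => abs_le_sqrt' u y
  set g : ℝ → ℝ := fun x => Real.exp (-R * Real.sqrt (1+x^2+y^2) + r*x) with hg_def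
  set f : ℝ → ℝ := fun u => (r * s u + R * u)/a with hf_def
  set f' : ℝ → ℝ := fun u => (r * (u / s u) + R)/a with hf'_def
  have hf' : ∀ u, HasDerivAt f (f' u) u := by
    intro u
    have h1 := ((hasDerivAt_sq y u).const_mul r).add ((hasDerivAt_id u).const_mul R)
    have h2 := h1.div_const a
    refine h2.congr_deriv ?_
    simp [hf'_def, mul_one, hs_def]
  have hf'pos : ∀ u, 0 < f' u := by
    intro u
    have h1 : -(1:ℝ) ≤ u / s u := by
      rw [le_div_iff₀ (hs u)]
      have := (neg_abs_le u)
      have := habs u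
      linarith
    have h2 : r * (-1:ℝ) ≤ r * (u / s u) := mul_le_mul_of_nonneg_left h1 hr
    apply div_pos _ ha
    linarith
  have hmono : StrictMono f := by
    apply strictMono_of_deriv_pos
    intro u
    rw [(hf' u).deriv]
    exact hf'pos u
  have hcontf : Continuous f := by
    rw [continuous_iff_continuousAt]
    exact fun u => (hf' u).continuousAt
  have htop : Tendsto f atTop atTop := by
    apply tendsto_atTop_mono (fun u => ?_) (Tendsto.const_mul_atTop (div_pos hR0 ha) tendsto_id)
    show R/a * (id u) ≤ f u
    rw [show R/a * (id u) = (R*u)/a from by simp; ring]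
    apply (div_le_div_iff_of_pos_right ha).2
    nlinarith [(hs u).le]
  have hbot : Tendsto f atBot atBot := by
    have hy0 : (0:ℝ) ≤ 1 + y^2 := by positivity
    have hbl : Tendsto (fun u : ℝ => (R-r)/a * u + (r*Real.sqrt (1+y^2))/a) atBot atBot := by
      apply tendsto_atBot_add_const_right
      exact Tendsto.const_mul_atBot (div_pos (by linarith) ha) tendsto_id
    apply tendsto_atBot_mono' atBot ?_ hbl
    · filter_upwards [eventually_le_atBot (0:ℝ)] with u hu
      have hsb : s u ≤ Real.sqrt (1+y^2) - u := by
        have h1 : s u ≤ Real.sqrt ((Real.sqrt (1+y^2) - u)^2) := by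
          apply Real.sqrt_le_sqrt
          nlinarith [Real.sq_sqrt hy0, Real.sqrt_nonneg (1+y^2)]
        rwa [Real.sqrt_sq (by nlinarith [Real.sqrt_nonneg (1+y^2)])] at h1
      show f u ≤ _
      rw [hf_def]
      have h2 : r * s u + R * u ≤ r * (Real.sqrt (1+y^2) - u) + R * u :=
        add_le_add_left (mul_le_mul_of_nonneg_left hsb hr) _
      calc (r * s u + R * u)/a ≤ (r * (Real.sqrt (1+y^2) - u) + R * u)/a :=
            (div_le_div_iff_of_pos_right ha).2 h2
        _ = (R-r)/a * u + (r*Real.sqrt (1+y^2))/a := by ring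
  have hsurj : Function.Surjective f := hcontf.surjective htop hbot
  have himg : f '' univ = univ := by rw [image_univ]; exact hsurj.range_eq
  have key1 : ∀ u, Real.sqrt (1 + (f u)^2 + y^2) = (R * s u + r*u)/a := by
    intro u
    have h0 : 0 ≤ (R * s u + r*u)/a := by
      apply div_nonneg _ ha.le
      nlinarith [habs u, neg_abs_le u, (hs u).le]
    rw [show 1 + (f u)^2 + y^2 = ((R * s u + r*u)/a)^2 from by
      rw [hf_def]
      field_simp
      nlinarith [hs2 u, ha2]]
    exact Real.sqrt_sq h0
  have key2 : ∀ u, -R * ((R * s u + r*u)/a) + r * f u = -a * s u := by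
    intro u
    rw [hf_def]
    field_simp
    linear_combination (s u) * ha2
  calc (∫ x : ℝ, g x) = ∫ x in univ, g x := setIntegral_univ.symm
    _ = ∫ x in f '' univ, g x := by rw [himg]
    _ = ∫ u in univ, |f' u| • g (f u) :=
        integral_image_eq_integral_abs_deriv_smul MeasurableSet.univ
          (fun u _ => (hf' u).hasDerivWithinAt) (hmono.injective.injOn) g
    _ = ∫ u, |f' u| • g (f u) := setIntegral_univ
    _ = _ := by
        apply integral_congr_ae
        apply Eventually.of_forall
        intro u
        show |f' u| • Real.exp (-R * Real.sqrt (1 + (f u)^2 + y^2) + r * f u) = _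
        rw [key1 u, key2 u, abs_of_pos (hf'pos u), smul_eq_mul]
        rw [show f' u = (R + r * (u / s u))/a from by rw [hf'_def]; ring]

lemma abs_le_sqrt0 (x : ℝ) : |x| ≤ Real.sqrt (1+x^2) := by
  simpa using abs_le_sqrt' x 0

lemma odd_zero (c y : ℝ) :
    ∫ u : ℝ, (u / Real.sqrt (1+u^2+y^2)) * Real.exp (-c * Real.sqrt (1+u^2+y^2)) = 0 := by
  set k : ℝ → ℝ := fun u => (u / Real.sqrt (1+u^2+y^2)) * Real.exp (-c * Real.sqrt (1+u^2+y^2))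
    with hk_def
  have hk : ∀ u, k (-u) = - k u := by
    intro u
    simp only [hk_def, neg_sq, neg_div, neg_mul]
  have h1 : ∫ u, k (-u) = ∫ u, k u := integral_neg_eq_self k volume
  have h2 : ∫ u, k (-u) = - ∫ u, k u := by
    rw [show (fun u => k (-u)) = fun u => - k u from funext hk, integral_neg]
  linarith [h1.symm.trans h2]

lemma int1D_exp (c y : ℝ) (hc : 0 < c) :
    Integrable (fun u : ℝ => Real.exp (-c * Real.sqrt (1+u^2+y^2))) := by
  refine (integrable_exp_abs c hc).mono' (Continuous.aestronglyMeasurable (by fun_prop)) (Eventually.of_forall fun u => ?_)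
  rw [Real.norm_eq_abs, abs_of_nonneg (Real.exp_nonneg _)]
  exact Real.exp_le_exp.2 (by nlinarith [abs_le_sqrt' u y])

lemma int1D_odd (c y : ℝ) (hc : 0 < c) :
    Integrable (fun u : ℝ =>
      (u / Real.sqrt (1+u^2+y^2)) * Real.exp (-c * Real.sqrt (1+u^2+y^2))) := by
  have hcont : Continuous (fun u : ℝ =>
      (u / Real.sqrt (1+u^2+y^2)) * Real.exp (-c * Real.sqrt (1+u^2+y^2))) := by
    apply Continuous.mul _ (by fun_prop)
    apply Continuous.div continuous_id (by fun_prop)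
    intro u
    positivity
  refine (integrable_exp_abs c hc).mono' hcont.aestronglyMeasurable (Eventually.of_forall fun u => ?_)
  have hs : 0 < Real.sqrt (1+u^2+y^2) := Real.sqrt_pos.2 (by positivity)
  have h1 : |u / Real.sqrt (1+u^2+y^2)| ≤ 1 := by
    rw [abs_div, abs_of_pos hs, div_le_one hs]
    exact abs_le_sqrt' u y
  rw [Real.norm_eq_abs, abs_mul, abs_of_nonneg (Real.exp_nonneg _)]
  calc |u / Real.sqrt (1+u^2+y^2)| * Real.exp (-c * Real.sqrt (1+u^2+y^2))
      ≤ 1 * Real.exp (-c * Real.sqrt (1+u^2+y^2)) :=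
        mul_le_mul_of_nonneg_right h1 (Real.exp_nonneg _)
    _ = Real.exp (-c * Real.sqrt (1+u^2+y^2)) := one_mul _
    _ ≤ Real.exp (-c * |u|) := Real.exp_le_exp.2 (by nlinarith [abs_le_sqrt' u y])

lemma intOn_bound1 (b : ℝ) (hb : 0 < b) :
    IntegrableOn (fun z : ℝ => z * Real.exp (-b*z)) (Ioi 0) := by
  refine ((exp_neg_integrableOn_Ioi 0 (half_pos hb)).const_mul (2/b)).mono'
    (Continuous.aestronglyMeasurable (by fun_prop)) ?_
  filter_upwards [ae_restrict_mem measurableSet_Ioi] with z hz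
  have hz0 : (0:ℝ) < z := hz
  rw [Real.norm_eq_abs, abs_of_nonneg (by positivity)]
  have h1 : b*z ≤ 2 * Real.exp (b/2*z) := by nlinarith [Real.add_one_le_exp (b/2*z)]
  have h2 : b*z*Real.exp (-b*z) ≤ 2 * Real.exp (b/2*z) * Real.exp (-b*z) :=
    mul_le_mul_of_nonneg_right h1 (Real.exp_nonneg _)
  have h3 : Real.exp (b/2*z) * Real.exp (-b*z) = Real.exp (-(b/2)*z) := by
    rw [← Real.exp_add]; ring_nf
  rw [div_mul_eq_mul_div, le_div_iff₀ hb]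
  nlinarith [h2, h3]

lemma intOn_radial (c : ℝ) (hc : 0 < c) :
    IntegrableOn (fun z : ℝ => z * Real.exp (-c * Real.sqrt (1+z^2))) (Ioi 0) := by
  refine (intOn_bound1 c hc).mono' (Continuous.aestronglyMeasurable (by fun_prop)) ?_
  filter_upwards [ae_restrict_mem measurableSet_Ioi] with z hz
  have hz0 : (0:ℝ) < z := hz
  rw [Real.norm_eq_abs, abs_of_nonneg (by positivity)]
  apply mul_le_mul_of_nonneg_left _ hz0.le
  apply Real.exp_le_exp.2
  nlinarith [abs_le_sqrt0 z, le_abs_self z]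

lemma intOn_prod (c : ℝ) (hc : 0 < c) :
    IntegrableOn (fun p : ℝ×ℝ => p.1 * Real.exp (-c * Real.sqrt (1+p.1^2)))
      ((Ioi 0) ×ˢ (Ioo (-Real.pi) Real.pi)) (volume.prod volume) := by
  rw [IntegrableOn, ← Measure.prod_restrict]
  have h1 : Integrable (fun _ : ℝ => (1:ℝ)) (volume.restrict (Ioo (-Real.pi) Real.pi)) := by
    rw [← IntegrableOn]
    apply integrableOn_const
    rw [Real.volume_Ioo]
    exact ENNReal.ofReal_ne_top
    simp
  have := (intOn_radial c hc).mul_prod h1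
  simpa using this

/-- Modified Bessel function of the first kind of order 0:
`I₀(z) = (1/(2π)) ∫₀^{2π} e^{z cos φ} dφ`. -/
def I0 (z : ℝ) : ℝ :=
  (1 / (2 * Real.pi)) * ∫ φ in (0:ℝ)..(2 * Real.pi), Real.exp (z * Real.cos φ)

lemma I0_eq (w : ℝ) : I0 w
    = (1/(2*Real.pi)) * ∫ φ in Ioo (-Real.pi) Real.pi, Real.exp (w * Real.cos φ) := by
  rw [I0]
  congr 1
  have hper : Function.Periodic (fun φ => Real.exp (w * Real.cos φ)) (2*Real.pi) := fun φ => by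
    simp [Real.cos_add_two_pi]
  have h := hper.intervalIntegral_add_eq 0 (-Real.pi)
  rw [zero_add, show -Real.pi + 2*Real.pi = Real.pi by ring] at h
  rw [h, intervalIntegral.integral_of_le (by linarith [Real.pi_pos] : -Real.pi ≤ Real.pi),
    integral_Ioc_eq_integral_Ioo]

lemma norm_polar (p : ℝ×ℝ) :
    1 + (p.1*Real.cos p.2)^2 + (p.1*Real.sin p.2)^2 = 1 + p.1^2 := by
  have := Real.sin_sq_add_cos_sq p.2
  nlinarith

lemma intG (R r : ℝ) (hr : 0 ≤ r) (hR : r < R) :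
    Integrable (fun v : ℝ×ℝ => Real.exp (-R * Real.sqrt (1+v.1^2+v.2^2) + r*v.1)) := by
  refine (integrable2 (R-r) (by linarith)).mono'
    (Continuous.aestronglyMeasurable (by fun_prop)) (Eventually.of_forall fun v => ?_)
  rw [Real.norm_eq_abs, abs_of_nonneg (Real.exp_nonneg _)]
  apply Real.exp_le_exp.2
  have h1 : v.1 ≤ Real.sqrt (1+v.1^2+v.2^2) := (le_abs_self v.1).trans (abs_le_sqrt' v.1 v.2)
  nlinarith

lemma intOn_F (R r : ℝ) (hr : 0 ≤ r) (hR : r < R) :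
    IntegrableOn (fun p : ℝ×ℝ => p.1 * Real.exp (-R*Real.sqrt (1+p.1^2) + r*(p.1*Real.cos p.2)))
      ((Ioi 0) ×ˢ (Ioo (-Real.pi) Real.pi)) (volume.prod volume) := by
  refine (intOn_prod (R-r) (by linarith)).mono'
    ((Continuous.aestronglyMeasurable (by fun_prop)).restrict) ?_
  filter_upwards [ae_restrict_mem (measurableSet_Ioi.prod measurableSet_Ioo)] with p hp
  have hp1 : (0:ℝ) < p.1 := hp.1
  rw [Real.norm_eq_abs, abs_mul, abs_of_pos hp1, abs_of_nonneg (Real.exp_nonneg _)]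
  apply mul_le_mul_of_nonneg_left _ hp1.le
  apply Real.exp_le_exp.2
  have h1 : p.1 * Real.cos p.2 ≤ p.1 := by nlinarith [Real.cos_le_one p.2]
  have h2 : p.1 ≤ Real.sqrt (1+p.1^2) := (le_abs_self p.1).trans (abs_le_sqrt0 p.1)
  nlinarith

lemma planar_radial (c : ℝ) (hc : 0 < c) :
    ∫ v : ℝ×ℝ, Real.exp (-c * Real.sqrt (1+v.1^2+v.2^2))
      = 2*Real.pi*(Real.exp (-c)*(c+1)/c^2) := by
  rw [← integral_comp_polarCoord_symm (fun v : ℝ×ℝ => Real.exp (-c * Real.sqrt (1+v.1^2+v.2^2)))]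
  rw [show polarCoord.target = (Ioi (0:ℝ)) ×ˢ (Ioo (-Real.pi) Real.pi) from rfl]
  have hcongr : ∀ p ∈ (Ioi (0:ℝ)) ×ˢ (Ioo (-Real.pi) Real.pi),
      p.1 • (fun v : ℝ×ℝ => Real.exp (-c * Real.sqrt (1+v.1^2+v.2^2))) (polarCoord.symm p)
        = p.1 * Real.exp (-c * Real.sqrt (1+p.1^2)) := by
    intro p _
    show p.1 • Real.exp (-c * Real.sqrt (1+(p.1*Real.cos p.2)^2+(p.1*Real.sin p.2)^2)) = _
    rw [norm_polar p, smul_eq_mul]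
  rw [setIntegral_congr_fun (measurableSet_Ioi.prod measurableSet_Ioo) hcongr]
  have h2 : (volume : Measure (ℝ×ℝ)) = (volume : Measure ℝ).prod volume := Measure.volume_eq_prod ℝ ℝ
  rw [h2, MeasureTheory.setIntegral_prod _ (intOn_prod c hc)]
  have hin : ∀ z ∈ Ioi (0:ℝ), (∫ φ in Ioo (-Real.pi) Real.pi, z * Real.exp (-c*Real.sqrt (1+z^2)))
      = (2*Real.pi) * (z * Real.exp (-c*Real.sqrt (1+z^2))) := by
    intro z _
    rw [setIntegral_const, Real.volume_real_Ioo_of_le (by linarith [Real.pi_pos]), smul_eq_mul]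
    ring_nf
  rw [setIntegral_congr_fun measurableSet_Ioi hin, integral_const_mul, key1D c hc]

lemma step1 (R r : ℝ) (hr : 0 ≤ r) (hR : r < R) :
    (∫ z in Ioi (0:ℝ), z * Real.exp (-R * Real.sqrt (1 + z ^ 2)) * I0 (r * z))
      = (1/(2*Real.pi)) * ∫ p in (Ioi (0:ℝ)) ×ˢ (Ioo (-Real.pi) Real.pi),
          p.1 * Real.exp (-R * Real.sqrt (1+p.1^2) + r*(p.1 * Real.cos p.2))
            ∂(volume.prod volume) := by
  rw [MeasureTheory.setIntegral_prod _ (intOn_F R r hr hR), ← integral_const_mul]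
  apply setIntegral_congr_fun measurableSet_Ioi
  intro z _
  have hinner : (∫ φ in Ioo (-Real.pi) Real.pi, z * Real.exp (-R*Real.sqrt (1+z^2) + r*(z*Real.cos φ)))
      = (z * Real.exp (-R*Real.sqrt (1+z^2))) * ∫ φ in Ioo (-Real.pi) Real.pi,
          Real.exp ((r*z) * Real.cos φ) := by
    rw [← integral_const_mul]
    apply setIntegral_congr_fun measurableSet_Ioo
    intro φ _
    show z * Real.exp (-R*Real.sqrt (1+z^2) + r*(z*Real.cos φ))
        = z * Real.exp (-R*Real.sqrt (1+z^2)) * Real.exp ((r*z) * Real.cos φ)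
    rw [mul_assoc, ← Real.exp_add]
    congr 2
    ring
  show z * Real.exp (-R * Real.sqrt (1 + z ^ 2)) * I0 (r * z)
      = (1/(2*Real.pi)) * ∫ φ in Ioo (-Real.pi) Real.pi,
          z * Real.exp (-R*Real.sqrt (1+z^2) + r*(z*Real.cos φ))
  rw [hinner, I0_eq]
  ring

lemma step2 (R r : ℝ) :
    (∫ p in (Ioi (0:ℝ)) ×ˢ (Ioo (-Real.pi) Real.pi),
        p.1 * Real.exp (-R * Real.sqrt (1+p.1^2) + r*(p.1 * Real.cos p.2)) ∂(volume.prod volume))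
      = ∫ v : ℝ×ℝ, Real.exp (-R * Real.sqrt (1+v.1^2+v.2^2) + r*v.1) := by
  rw [← integral_comp_polarCoord_symm
    (fun v : ℝ×ℝ => Real.exp (-R * Real.sqrt (1+v.1^2+v.2^2) + r*v.1))]
  rw [show polarCoord.target = (Ioi (0:ℝ)) ×ˢ (Ioo (-Real.pi) Real.pi) from rfl]
  rw [show (volume : Measure (ℝ×ℝ)) = (volume : Measure ℝ).prod volume from Measure.volume_eq_prod ℝ ℝ]
  apply setIntegral_congr_fun (measurableSet_Ioi.prod measurableSet_Ioo)
  intro p _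
  show _ = p.1 • Real.exp (-R * Real.sqrt (1+(p.1*Real.cos p.2)^2+(p.1*Real.sin p.2)^2)
      + r*(p.1*Real.cos p.2))
  rw [norm_polar p, smul_eq_mul]

lemma step3 (R r : ℝ) (hr : 0 ≤ r) (hR : r < R) :
    (∫ v : ℝ×ℝ, Real.exp (-R * Real.sqrt (1+v.1^2+v.2^2) + r*v.1))
      = (R / Real.sqrt (R^2-r^2))
          * ∫ v : ℝ×ℝ, Real.exp (-Real.sqrt (R^2-r^2) * Real.sqrt (1+v.1^2+v.2^2)) := by
  have hR0 : 0 < R := lt_of_le_of_lt hr hR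
  have ha : 0 < Real.sqrt (R^2-r^2) := Real.sqrt_pos.2 (by nlinarith)
  set a : ℝ := Real.sqrt (R^2-r^2) with ha_def
  have hG : Integrable (fun v : ℝ×ℝ => Real.exp (-R * Real.sqrt (1+v.1^2+v.2^2) + r*v.1))
      ((volume : Measure ℝ).prod volume) := by
    rw [← Measure.volume_eq_prod]; exact intG R r hr hR
  have hE : Integrable (fun v : ℝ×ℝ => Real.exp (-a * Real.sqrt (1+v.1^2+v.2^2)))
      ((volume : Measure ℝ).prod volume) := by
    rw [← Measure.volume_eq_prod]; exact integrable2 a ha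
  rw [show (volume : Measure (ℝ×ℝ)) = (volume : Measure ℝ).prod volume
    from Measure.volume_eq_prod ℝ ℝ]
  rw [integral_prod_symm _ hG, integral_prod_symm _ hE, ← integral_const_mul]
  apply integral_congr_ae
  apply Eventually.of_forall
  intro y
  show (∫ x : ℝ, Real.exp (-R * Real.sqrt (1+x^2+y^2) + r*x))
      = R/a * ∫ x : ℝ, Real.exp (-a * Real.sqrt (1+x^2+y^2))
  have h1 := subst_lemma R r hr hR y
  rw [h1]
  have h2 : ∀ u : ℝ, ((R + r * (u / Real.sqrt (1+u^2+y^2))) / a)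
        * Real.exp (-a * Real.sqrt (1+u^2+y^2))
      = (R/a) * Real.exp (-a * Real.sqrt (1+u^2+y^2))
        + (r/a) * ((u / Real.sqrt (1+u^2+y^2)) * Real.exp (-a * Real.sqrt (1+u^2+y^2))) := by
    intro u; ring
  rw [integral_congr_ae (Eventually.of_forall h2)]
  rw [integral_add ((int1D_exp a y ha).const_mul (R/a)) ((int1D_odd a y ha).const_mul (r/a))]
  rw [integral_const_mul, integral_const_mul, odd_zero a y]
  ring

theorem J1_eval (R r : ℝ) (hr : 0 ≤ r) (hR : r < R) :
    (∫ z in Set.Ioi (0:ℝ), z * Real.exp (-R * Real.sqrt (1 + z ^ 2)) * I0 (r * z))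
      = (R / (R ^ 2 - r ^ 2)) * (1 + 1 / Real.sqrt (R ^ 2 - r ^ 2))
          * Real.exp (-Real.sqrt (R ^ 2 - r ^ 2)) := by
  have hR0 : 0 < R := lt_of_le_of_lt hr hR
  have ha : 0 < Real.sqrt (R^2-r^2) := Real.sqrt_pos.2 (by nlinarith)
  have ha2 : (Real.sqrt (R^2-r^2))^2 = R^2-r^2 := Real.sq_sqrt (by nlinarith)
  rw [step1 R r hr hR, step2 R r, step3 R r hr hR, planar_radial _ ha]
  set a : ℝ := Real.sqrt (R^2-r^2) with ha_def
  rw [← ha2]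
  have hπ : Real.pi ≠ 0 := ne_of_gt Real.pi_pos
  field_simp
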